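/- Let C1 and C2 be linear codes over F_q of length n with parameters [n, k1, d1]_q and [n, k2, d2]_q forming an ℓ-intersection pair (dim(C1 ∩ C2) = ℓ). Then, taking H1 to be a generator matrix of C1 and H2 a parity-check matrix of C2, rank(H1 · H2^t) = k1 − ℓ; consequently the entanglement-assisted quantum code construction with c = rank(H1·H2^t) applied to the codes C1^⊥ and C2 yields parameters n, logical dimension (n − k1) + k2 − n + c = k2 − ℓ, and c = k1 − ℓ maximally entangled states. -/

import Mathlib

open Matrix

variable {F : Type*} [Field F] [Fintype F]

/-- The Euclidean dual of a linear code `C ⊆ F^n`. -/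
def dualCode {n : ℕ} (C : Submodule F (Fin n → F)) : Submodule F (Fin n → F) where
  carrier := {u | ∀ c ∈ C, dotProduct u c = 0}
  add_mem' := by
    intro a b ha hb c hc
    simp [add_dotProduct, ha c hc, hb c hc]
  zero_mem' := by
    intro c hc
    simp
  smul_mem' := by
    intro r a ha c hc
    simp [smul_dotProduct, ha c hc]

/-- `G` is a generator matrix of the code `C`: its rows form a basis of `C`. -/
def IsGenMat {n k : ℕ} (C : Submodule F (Fin n → F)) (G : Matrix (Fin k) (Fin n) F) : Prop :=
  LinearIndependent F (fun i => G i) ∧ Submodule.span F (Set.range fun i => G i) = C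

lemma mem_dualCode {n : ℕ} {C : Submodule F (Fin n → F)} {u : Fin n → F} :
    u ∈ dualCode C ↔ ∀ c ∈ C, dotProduct u c = 0 := Iff.rfl

lemma ker_mulVecLin_of_genMat {n k : ℕ} {C : Submodule F (Fin n → F)}
    {G : Matrix (Fin k) (Fin n) F} (hG : IsGenMat C G) :
    LinearMap.ker G.mulVecLin = dualCode C := by
  ext x
  have hker : x ∈ LinearMap.ker G.mulVecLin ↔ ∀ i, dotProduct (G i) x = 0 := by
    simp [LinearMap.mem_ker, Matrix.mulVecLin_apply, Matrix.mulVec, funext_iff]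
  rw [hker, mem_dualCode]
  constructor
  · intro h c hc
    rw [← hG.2] at hc
    induction hc using Submodule.span_induction with
    | mem y hy => obtain ⟨i, rfl⟩ := hy; rw [dotProduct_comm]; exact h i
    | zero => simp
    | add a b _ _ ha hb => simp [dotProduct_add, ha, hb]
    | smul r a _ ha => simp [dotProduct_smul, ha]
  · intro h i
    rw [dotProduct_comm]
    exact h (G i) (hG.2 ▸ Submodule.subset_span ⟨i, rfl⟩)

lemma rank_of_genMat {n k : ℕ} {C : Submodule F (Fin n → F)}
    {G : Matrix (Fin k) (Fin n) F} (hG : IsGenMat C G) :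
    G.rank = Module.finrank F C := by
  rw [← Matrix.rank_transpose, Matrix.rank, Matrix.range_mulVecLin, ]
  exact congrArg (fun s : Submodule F (Fin n → F) => Module.finrank F ↥s) hG.2

lemma exists_genMat {n : ℕ} (C : Submodule F (Fin n → F)) :
    ∃ G : Matrix (Fin (Module.finrank F C)) (Fin n) F, IsGenMat C G := by
  let b := Module.finBasis F C
  refine ⟨Matrix.of fun i => (b i : Fin n → F), ?_, ?_⟩
  · exact (LinearIndependent.map' b.linearIndependent C.subtype (Submodule.ker_subtype C))
  · have : (Set.range fun i => ((b i : C) : Fin n → F)) = C.subtype '' (Set.range b) := by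
      ext x; simp [Set.range_comp]
    rw [show (Set.range fun i => (Matrix.of fun i => (b i : Fin n → F)) i) =
        C.subtype '' (Set.range b) from this, Submodule.span_image, b.span_eq,
      Submodule.map_top, Submodule.range_subtype]

lemma finrank_dualCode {n : ℕ} (C : Submodule F (Fin n → F)) :
    Module.finrank F (dualCode C) = n - Module.finrank F C := by
  obtain ⟨G, hG⟩ := exists_genMat C
  have h1 := LinearMap.finrank_range_add_finrank_ker G.mulVecLin
  rw [ker_mulVecLin_of_genMat hG] at h1
  have h2 : Module.finrank F (LinearMap.range G.mulVecLin) = Module.finrank F C := by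
    rw [← Matrix.rank, rank_of_genMat hG]
  rw [h2, Module.finrank_fintype_fun_eq_card, Fintype.card_fin] at h1
  omega

lemma finrank_le_card {n : ℕ} (C : Submodule F (Fin n → F)) : Module.finrank F C ≤ n := by
  have := Submodule.finrank_le C
  rwa [Module.finrank_fintype_fun_eq_card, Fintype.card_fin] at this

lemma dualCode_dualCode {n : ℕ} (C : Submodule F (Fin n → F)) :
    dualCode (dualCode C) = C := by
  have hle : C ≤ dualCode (dualCode C) := by
    intro c hc u hu
    rw [dotProduct_comm]
    exact hu c hc
  refine (Submodule.eq_of_le_of_finrank_le hle ?_).symm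
  rw [finrank_dualCode, finrank_dualCode]
  have := finrank_le_card C
  omega

theorem EAQECC_parameters_from_intersection_pair {n k1 k2 ℓ m2 : ℕ}
    (C1 C2 : Submodule F (Fin n → F))
    (hk1 : Module.finrank F C1 = k1) (hk2 : Module.finrank F C2 = k2)
    (hl : Module.finrank F ↥(C1 ⊓ C2) = ℓ)
    (G1 : Matrix (Fin k1) (Fin n) F) (hG1 : IsGenMat C1 G1)
    (H2 : Matrix (Fin m2) (Fin n) F) (hH2 : IsGenMat (dualCode C2) H2) :
    (G1 * H2.transpose).rank = k1 - ℓ ∧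
      ((n : ℤ) - k1) + k2 - n + ((G1 * H2.transpose).rank : ℤ) = (k2 : ℤ) - ℓ := by
  have hker : LinearMap.ker H2.mulVecLin = C2 := by
    rw [ker_mulVecLin_of_genMat hH2, dualCode_dualCode]
  have hrank : (G1 * H2.transpose).rank = Module.finrank F (C1.map H2.mulVecLin) := by
    rw [← Matrix.rank_transpose, Matrix.transpose_mul, Matrix.transpose_transpose,
      Matrix.rank, Matrix.mulVecLin_mul, LinearMap.range_comp, Matrix.range_mulVecLin,
      ]
    exact congrArg (fun s : Submodule F (Fin n → F) => Module.finrank F ↥(s.map H2.mulVecLin)) hG1.2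
  have hrn := LinearMap.finrank_range_add_finrank_ker (H2.mulVecLin.domRestrict C1)
  rw [LinearMap.range_domRestrict, LinearMap.ker_domRestrict, hker] at hrn
  have hcomap : Module.finrank F (Submodule.comap C1.subtype C2) =
      Module.finrank F ↥(C1 ⊓ C2) := by
    rw [show Submodule.comap C1.subtype C2 = Submodule.comap C1.subtype (C1 ⊓ C2) by
      ext x; simp [x.2]]
    exact (Submodule.comapSubtypeEquivOfLe inf_le_left).finrank_eq
  rw [hcomap, hl, hk1] at hrn
  have hlk : ℓ ≤ k1 := by
    rw [← hl, ← hk1]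
    exact Submodule.finrank_mono inf_le_left
  have hmain : (G1 * H2.transpose).rank = k1 - ℓ := by rw [hrank]; omega
  refine ⟨hmain, ?_⟩
  rw [hmain]
  have hk1n : k1 ≤ n := hk1 ▸ finrank_le_card C1
  push_cast [Nat.cast_sub hlk]
  ring
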